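/- For fixed ℏ ∈ R, the formula [ρ(s,x,y,b,r)f](u) = √r · e^{2πiℏ(s + x(u-y) - b(u-y)²/2)} · f(r(u-y)) defines a unitary representation of the SSR group G on L²(R): each ρ(g) is unitary and ρ(g₁g₂) = ρ(g₁)ρ(g₂). -/

import Mathlib

/-- The underlying set of the SSR group: (s,x,y,b,r) with r > 0. -/
def SSR : Type := ℝ × ℝ × ℝ × ℝ × {r : ℝ // 0 < r}

/-- The SSR group multiplication. -/
noncomputable def ssrMul (g g' : SSR) : SSR :=
  ⟨g.1 + g'.1 + g.2.1 * ((g.2.2.2.2 : ℝ)⁻¹ * g'.2.2.1)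
      - g.2.2.2.1 * ((g.2.2.2.2 : ℝ)⁻¹ * g'.2.2.1) ^ 2 / 2,
   g.2.1 + (g.2.2.2.2 : ℝ) * g'.2.1 - g.2.2.2.1 * ((g.2.2.2.2 : ℝ)⁻¹ * g'.2.2.1),
   g.2.2.1 + (g.2.2.2.2 : ℝ)⁻¹ * g'.2.2.1,
   g.2.2.2.1 + g'.2.2.2.1 * (g.2.2.2.2 : ℝ) ^ 2,
   ⟨(g.2.2.2.2 : ℝ) * (g'.2.2.2.2 : ℝ), mul_pos g.2.2.2.2.2 g'.2.2.2.2.2⟩⟩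

/-- The identity element of the SSR group. -/
noncomputable def ssrOne : SSR := ⟨0, 0, 0, 0, ⟨1, one_pos⟩⟩

open Real MeasureTheory

/-- The Schrödinger type representation of the SSR group:
[ρ(s,x,y,b,r)f](u) = √r e^{2πiℏ(s + x(u-y) - b(u-y)²/2)} f(r(u-y)). -/
noncomputable def ssrRho (h : ℝ) (g : SSR) (f : ℝ → ℂ) : ℝ → ℂ := fun u =>
  (Real.sqrt (g.2.2.2.2 : ℝ) : ℂ) *
    Complex.exp (2 * (π : ℂ) * Complex.I * (h : ℂ) *
      ((g.1 : ℂ) + (g.2.1 : ℂ) * ((u : ℂ) - (g.2.2.1 : ℂ))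
        - (g.2.2.2.1 : ℂ) * ((u : ℂ) - (g.2.2.1 : ℂ)) ^ 2 / 2)) *
    f ((g.2.2.2.2 : ℝ) * (u - g.2.2.1))

lemma ssr_map_volume (r y : ℝ) (hr : 0 < r) :
    Measure.map (fun u : ℝ => r * (u - y)) volume = ENNReal.ofReal r⁻¹ • volume := by
  have : (fun u : ℝ => r * (u - y)) = (fun u : ℝ => r * u) ∘ (fun u : ℝ => u + (-y)) := by
    funext u; simp [sub_eq_add_neg]
  rw [this, ← Measure.map_map (measurable_const_mul r) (measurable_add_const (-y)),
    map_add_right_eq_self volume (-y), Real.map_volume_mul_left hr.ne',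
    abs_of_pos (inv_pos.2 hr)]

noncomputable def ssrEquiv (r y : ℝ) (hr : r ≠ 0) : ℝ ≃ᵐ ℝ :=
  ((Homeomorph.addRight (-y)).trans (Homeomorph.mulLeft₀ r hr)).toMeasurableEquiv

lemma ssr_lintegral (r y : ℝ) (hr : 0 < r) (G : ℝ → ENNReal) :
    ∫⁻ u, G (r * (u - y)) = ENNReal.ofReal r⁻¹ * ∫⁻ u, G u := by
  have he : ∀ u, (ssrEquiv r y hr.ne') u = r * (u - y) := by
    intro u; simp [ssrEquiv, sub_eq_add_neg]
  have hmap : Measure.map (ssrEquiv r y hr.ne') volume = ENNReal.ofReal r⁻¹ • volume := by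
    rw [show ((ssrEquiv r y hr.ne' : ℝ → ℝ)) = fun u : ℝ => r * (u - y) from funext he]
    exact ssr_map_volume r y hr
  calc ∫⁻ u, G (r * (u - y)) = ∫⁻ u, G ((ssrEquiv r y hr.ne') u) := by simp_rw [he]
    _ = ∫⁻ u, G u ∂(Measure.map (ssrEquiv r y hr.ne') volume) :=
        (lintegral_map_equiv G (ssrEquiv r y hr.ne')).symm
    _ = ENNReal.ofReal r⁻¹ * ∫⁻ u, G u := by rw [hmap, lintegral_smul_measure, smul_eq_mul]

lemma ssr_norm (h : ℝ) (g : SSR) (f : ℝ → ℂ) (u : ℝ) :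
    ‖ssrRho h g f u‖ = Real.sqrt (g.2.2.2.2 : ℝ) * ‖f ((g.2.2.2.2 : ℝ) * (u - g.2.2.1))‖ := by
  have hexp : (2 * (π : ℂ) * Complex.I * (h : ℂ) *
      ((g.1 : ℂ) + (g.2.1 : ℂ) * ((u : ℂ) - (g.2.2.1 : ℂ))
        - (g.2.2.2.1 : ℂ) * ((u : ℂ) - (g.2.2.1 : ℂ)) ^ 2 / 2))
      = ((2 * π * h * (g.1 + g.2.1 * (u - g.2.2.1)
          - g.2.2.2.1 * (u - g.2.2.1) ^ 2 / 2) : ℝ) : ℂ) * Complex.I := by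
    push_cast; ring
  rw [ssrRho, hexp, norm_mul, norm_mul,
    Complex.norm_exp_ofReal_mul_I, Complex.norm_real, Real.norm_eq_abs,
    abs_of_nonneg (Real.sqrt_nonneg _), mul_one]

lemma helper (a b : ℝ) (E E₁ E₂ F : ℂ) (hE : E = E₁ + E₂) :
    ((a * b : ℝ) : ℂ) * Complex.exp E * F
      = (a : ℂ) * Complex.exp E₁ * ((b : ℂ) * Complex.exp E₂ * F) := by
  rw [hE, Complex.exp_add]; push_cast; ring


/-- The formula ρ defines a unitary representation of the SSR group on L²(ℝ):
each ρ(g) is an invertible isometry of L² and ρ(g₁g₂) = ρ(g₁)ρ(g₂). -/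
theorem ssr_rho_unitary_representation (h : ℝ) :
    (∀ (g : SSR) (f : ℝ → ℂ), eLpNorm (ssrRho h g f) 2 volume = eLpNorm f 2 volume) ∧
    (∀ (g : SSR) (f : ℝ → ℂ), MemLp f 2 volume → MemLp (ssrRho h g f) 2 volume) ∧
    (∀ f : ℝ → ℂ, ssrRho h ssrOne f = f) ∧
    (∀ (g₁ g₂ : SSR) (f : ℝ → ℂ), ssrRho h (ssrMul g₁ g₂) f = ssrRho h g₁ (ssrRho h g₂ f)) := by
  have norm_eq : ∀ (g : SSR) (f : ℝ → ℂ),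
      eLpNorm (ssrRho h g f) 2 volume = eLpNorm f 2 volume := by
    intro g f
    set r : ℝ := (g.2.2.2.2 : ℝ) with hrdef
    have hr : 0 < r := g.2.2.2.2.2
    rw [eLpNorm_eq_lintegral_rpow_enorm_toReal two_ne_zero ENNReal.ofNat_ne_top,
      eLpNorm_eq_lintegral_rpow_enorm_toReal two_ne_zero ENNReal.ofNat_ne_top]
    simp only [enorm_eq_nnnorm]
    congr 1
    have hpt : ∀ u : ℝ, ((‖ssrRho h g f u‖₊ : ENNReal)) ^ ENNReal.toReal 2
        = ENNReal.ofReal r * ((‖f (r * (u - g.2.2.1))‖₊ : ENNReal)) ^ ENNReal.toReal 2 := by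
      intro u
      rw [← enorm_eq_nnnorm, ← enorm_eq_nnnorm, ← ofReal_norm, ← ofReal_norm, ssr_norm,
        ENNReal.ofReal_mul (Real.sqrt_nonneg _),
        ENNReal.mul_rpow_of_nonneg _ _ (by simp : (0:ℝ) ≤ ENNReal.toReal 2)]
      congr 1
      rw [ENNReal.ofReal_rpow_of_nonneg (Real.sqrt_nonneg _)
        (by simp : (0:ℝ) ≤ ENNReal.toReal 2)]
      congr 1
      rw [show (ENNReal.toReal 2) = ((2 : ℕ) : ℝ) by simp, Real.rpow_natCast]
      exact Real.sq_sqrt hr.le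
    simp_rw [hpt]
    rw [lintegral_const_mul' _ _ ENNReal.ofReal_ne_top,
      ssr_lintegral r g.2.2.1 hr (fun t => (‖f t‖₊ : ENNReal) ^ ENNReal.toReal 2), ← mul_assoc, ← ENNReal.ofReal_mul hr.le,
      mul_inv_cancel₀ hr.ne', ENNReal.ofReal_one, one_mul]
  refine ⟨norm_eq, ?_, ?_, ?_⟩
  · intro g f hf
    set r : ℝ := (g.2.2.2.2 : ℝ) with hrdef
    have hr : 0 < r := g.2.2.2.2.2
    constructor
    · have h1 : AEStronglyMeasurable (fun u : ℝ => (Real.sqrt r : ℂ) *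
          Complex.exp (2 * (π : ℂ) * Complex.I * (h : ℂ) *
            ((g.1 : ℂ) + (g.2.1 : ℂ) * ((u : ℂ) - (g.2.2.1 : ℂ))
              - (g.2.2.2.1 : ℂ) * ((u : ℂ) - (g.2.2.1 : ℂ)) ^ 2 / 2))) volume := by
        apply Continuous.aestronglyMeasurable
        fun_prop
      have qmp : Measure.QuasiMeasurePreserving (fun u : ℝ => r * (u - g.2.2.1))
          volume volume := by
        refine ⟨(measurable_const_mul r).comp (measurable_id.sub measurable_const), ?_⟩
        rw [ssr_map_volume r g.2.2.1 hr]
        exact Measure.smul_absolutelyContinuous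
      have h2 : AEStronglyMeasurable (fun u : ℝ => f (r * (u - g.2.2.1))) volume :=
        hf.aestronglyMeasurable.comp_quasiMeasurePreserving qmp
      exact h1.mul h2
    · rw [norm_eq g f]
      exact hf.2
  · intro f
    funext u
    simp [ssrRho, ssrOne]
  · intro g₁ g₂ f
    funext u
    have hr₁ : (0:ℝ) < (g₁.2.2.2.2 : ℝ) := g₁.2.2.2.2.2
    obtain ⟨t, ht⟩ : ∃ t : ℝ, g₂.2.2.1 = (g₁.2.2.2.2 : ℝ) * t :=
      ⟨(g₁.2.2.2.2 : ℝ)⁻¹ * g₂.2.2.1, by field_simp⟩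
    simp only [ssrRho, ssrMul, ht]
    rw [show ((g₁.2.2.2.2 : ℝ))⁻¹ * ((g₁.2.2.2.2 : ℝ) * t) = t from by field_simp]
    rw [show (g₁.2.2.2.2 : ℝ) * (g₂.2.2.2.2 : ℝ) * (u - (g₁.2.2.1 + t))
        = (g₂.2.2.2.2 : ℝ) * ((g₁.2.2.2.2 : ℝ) * (u - g₁.2.2.1) - (g₁.2.2.2.2 : ℝ) * t)
        from by ring]
    rw [Real.sqrt_mul hr₁.le]
    refine helper _ _ _ _ _ _ ?_
    push_cast
    ring
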